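/- Let f : X → ℝ and g : X → ℝ be functions on a set X such that |f(x) − g(x)| ≤ ε for all x. Then for each k, the k-th largest values (over a fixed finite index family) satisfy |k-max_i f_i − k-max_i g_i| ≤ ε; consequently, for persistence diagrams D, D' of equal cardinality matched pointwise within bottleneck distance ε (in sup norm on ℝ²), the landscapes satisfy sup_t |λ_k(D)(t) − λ_k(D')(t)| ≤ ε. -/

import Mathlib

open scoped Classical

/-- The `k`-th largest element of a list of reals (`0` if there are fewer than `k` elements). -/
noncomputable def kmax (l : List ℝ) (k : ℕ) : ℝ :=
  (l.insertionSort (· ≥ ·)).getD (k - 1) 0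

/-- The tent function of a persistence diagram point `(b, d)`. -/
def tent (p : ℝ × ℝ) (t : ℝ) : ℝ :=
  max (min (t - p.1) (p.2 - t)) 0

/-- The `k`-th persistence landscape function of a finite diagram. -/
noncomputable def landscape {n : ℕ} (D : Fin n → ℝ × ℝ) (k : ℕ) (t : ℝ) : ℝ :=
  kmax (List.ofFn fun i => tent (D i) t) k

lemma countP_ge_of_sorted {s : List ℝ} (hs : s.Pairwise (· ≥ ·)) {i : ℕ} (hi : i < s.length) :
    i + 1 ≤ s.countP (fun x => decide (s[i] ≤ x)) := by
  have hlen : (s.take (i+1)).length = i + 1 := by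
    rw [List.length_take]; omega
  have h2 : (s.take (i+1)).countP (fun x => decide (s[i] ≤ x)) = i + 1 := by
    rw [List.countP_eq_length.2, hlen]
    intro a ha
    obtain ⟨j, hj, rfl⟩ := List.mem_iff_getElem.1 ha
    simp only [List.getElem_take, decide_eq_true_eq]
    have hj' : j < s.length := by rw [hlen] at hj; omega
    exact hs.rel_get_of_le (a := ⟨j, hj'⟩) (b := ⟨i, hi⟩)
      (by simp only [Fin.mk_le_mk]; rw [hlen] at hj; omega)
  have hsplit := (List.countP_append (p := fun x => decide (s[i] ≤ x)) (l₁ := s.take (i+1)) (l₂ := s.drop (i+1))).symm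
  rw [List.take_append_drop] at hsplit
  rw [← hsplit, h2]; omega

lemma le_getElem_of_countP {s : List ℝ} (hs : s.Pairwise (· ≥ ·)) {i : ℕ} (hi : i < s.length)
    {c : ℝ} (h : i + 1 ≤ s.countP (fun x => decide (c ≤ x))) : c ≤ s[i] := by
  by_contra hc
  push_neg at hc
  have hdrop : (s.drop i).countP (fun x => decide (c ≤ x)) = 0 := by
    rw [List.countP_eq_zero]
    intro a ha
    obtain ⟨j, hj, rfl⟩ := List.mem_iff_getElem.1 ha
    simp only [List.getElem_drop, decide_eq_true_eq]
    have hj' : i + j < s.length := by rw [List.length_drop] at hj; omega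
    intro hcle
    have : s[i+j] ≤ s[i] := hs.rel_get_of_le (a := ⟨i, hi⟩) (b := ⟨i+j, hj'⟩)
      (by simp only [Fin.mk_le_mk]; omega)
    linarith
  have htake : (s.take i).countP (fun x => decide (c ≤ x)) ≤ i := by
    calc _ ≤ (s.take i).length := List.countP_le_length
      _ ≤ i := by rw [List.length_take]; omega
  have hsplit := (List.countP_append (p := fun x => decide (c ≤ x)) (l₁ := s.take i) (l₂ := s.drop i)).symm
  rw [List.take_append_drop] at hsplit
  rw [← hsplit, hdrop] at h
  omega

lemma kmax_le_aux {n : ℕ} {ε : ℝ} (hε : 0 ≤ ε) (f g : Fin n → ℝ)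
    (h : ∀ i, f i ≤ g i + ε) (k : ℕ) :
    kmax (List.ofFn f) k ≤ kmax (List.ofFn g) k + ε := by
  unfold kmax
  set j := k - 1 with hj
  set sf := (List.ofFn f).insertionSort (· ≥ ·) with hsf
  set sg := (List.ofFn g).insertionSort (· ≥ ·) with hsg
  have lf : sf.length = n := by rw [hsf, List.length_insertionSort, List.length_ofFn]
  have lg : sg.length = n := by rw [hsg, List.length_insertionSort, List.length_ofFn]
  by_cases hjn : j < n
  · rw [List.getD_eq_getElem _ _ (show j < sf.length by rw [lf]; exact hjn),
        List.getD_eq_getElem _ _ (show j < sg.length by rw [lg]; exact hjn)]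
    set a := sf[j]'(show j < sf.length by rw [lf]; exact hjn) with ha
    have hcf : j + 1 ≤ sf.countP (fun x => decide (a ≤ x)) :=
      countP_ge_of_sorted (List.pairwise_insertionSort _ _) (show j < sf.length by rw [lf]; exact hjn)
    have hperm : sf.countP (fun x => decide (a ≤ x)) =
        (List.finRange n).countP (fun i => decide (a ≤ f i)) := by
      rw [hsf, (List.perm_insertionSort _ _).countP_eq, List.ofFn_eq_map, List.countP_map]
      rfl
    have hmono : (List.finRange n).countP (fun i => decide (a ≤ f i)) ≤
        (List.finRange n).countP (fun i => decide (a - ε ≤ g i)) := by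
      apply List.countP_mono_left
      intro x _ hx
      simp only [decide_eq_true_eq] at hx ⊢
      have := h x
      linarith
    have hcg : j + 1 ≤ sg.countP (fun x => decide (a - ε ≤ x)) := by
      rw [hsg, (List.perm_insertionSort _ _).countP_eq, List.ofFn_eq_map, List.countP_map]
      calc j + 1 ≤ _ := hcf
        _ = _ := hperm
        _ ≤ _ := hmono
    have := le_getElem_of_countP (List.pairwise_insertionSort _ _)
      (show j < sg.length by rw [lg]; exact hjn) hcg
    linarith
  · rw [List.getD_eq_default _ _ (by omega : sf.length ≤ j),
        List.getD_eq_default _ _ (by omega : sg.length ≤ j)]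
    linarith

lemma kmax_abs_aux {n : ℕ} {ε : ℝ} (hε : 0 ≤ ε) (f g : Fin n → ℝ)
    (h : ∀ i, |f i - g i| ≤ ε) (k : ℕ) :
    |kmax (List.ofFn f) k - kmax (List.ofFn g) k| ≤ ε := by
  rw [abs_sub_le_iff]
  constructor
  · have := kmax_le_aux hε f g (fun i => by have := abs_le.1 (h i); linarith) k
    linarith
  · have := kmax_le_aux hε g f (fun i => by have := abs_le.1 (h i); linarith) k
    linarith

lemma kmax_perm {n : ℕ} (h : Fin n → ℝ) (π : Equiv.Perm (Fin n)) (k : ℕ) :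
    kmax (List.ofFn (fun i => h (π i))) k = kmax (List.ofFn h) k := by
  unfold kmax
  congr 1
  refine (fun hp h1 h2 => List.Perm.eq_of_pairwise (le := (· ≥ ·)) (fun a b _ _ h h' => le_antisymm h' h) h1 h2 hp) ?_ ?_ ?_
  · exact ((List.perm_insertionSort _ _).trans
      (π.ofFn_comp_perm h)).trans (List.perm_insertionSort _ _).symm
  · exact List.pairwise_insertionSort _ _
  · exact List.pairwise_insertionSort _ _

lemma tent_lipschitz (p q : ℝ × ℝ) (t : ℝ) :
    |tent p t - tent q t| ≤ max |p.1 - q.1| |p.2 - q.2| := by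
  unfold tent
  calc |max (min (t - p.1) (p.2 - t)) 0 - max (min (t - q.1) (q.2 - t)) 0|
      ≤ max |min (t - p.1) (p.2 - t) - min (t - q.1) (q.2 - t)| |(0:ℝ) - 0| :=
        abs_max_sub_max_le_max _ _ _ _
    _ ≤ max (max |(t - p.1) - (t - q.1)| |(p.2 - t) - (q.2 - t)|) |(0:ℝ) - 0| := by
        apply max_le_max _ le_rfl
        exact abs_min_sub_min_le_max _ _ _ _
    _ ≤ max |p.1 - q.1| |p.2 - q.2| := by
        have h1 : |(t - p.1) - (t - q.1)| = |p.1 - q.1| := by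
          rw [show (t - p.1) - (t - q.1) = -(p.1 - q.1) by ring, abs_neg]
        have h2 : |(p.2 - t) - (q.2 - t)| = |p.2 - q.2| := by
          rw [show (p.2 - t) - (q.2 - t) = p.2 - q.2 by ring]
        rw [h1, h2]
        apply max_le le_rfl
        simp only [sub_zero, abs_zero]
        exact le_max_of_le_left (abs_nonneg _)

/-- Stability of `k`-max and of persistence landscapes: uniformly `ε`-close families
have `ε`-close `k`-th largest values, and diagrams matched within `ε` in sup norm
have uniformly `ε`-close landscapes. -/
theorem stmt11 {n : ℕ} (ε : ℝ) (hε : 0 ≤ ε) :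
    (∀ f g : Fin n → ℝ, (∀ i, |f i - g i| ≤ ε) → ∀ k : ℕ,
      |kmax (List.ofFn f) k - kmax (List.ofFn g) k| ≤ ε) ∧
    (∀ D D' : Fin n → ℝ × ℝ, ∀ π : Equiv.Perm (Fin n),
      (∀ i, max |(D i).1 - (D' (π i)).1| |(D i).2 - (D' (π i)).2| ≤ ε) →
      ∀ (k : ℕ) (t : ℝ), |landscape D k t - landscape D' k t| ≤ ε) := by
  refine ⟨fun f g h k => kmax_abs_aux hε f g h k, ?_⟩
  intro D D' π hm k t
  have hkey : |kmax (List.ofFn fun i => tent (D i) t) k -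
      kmax (List.ofFn fun i => tent (D' (π i)) t) k| ≤ ε := by
    apply kmax_abs_aux hε
    intro i
    exact (tent_lipschitz (D i) (D' (π i)) t).trans (hm i)
  unfold landscape
  rw [← kmax_perm (fun i => tent (D' i) t) π k]
  exact hkey
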